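/- Let A = [[A_ff, A_fc],[A_cf, A_cc]] be an invertible matrix on F ⊕ C with A_ff invertible, let P = [[W],[I]] and R = [Z, I], and set δ_P = A_ff·W + A_fc, δ_R = Z·A_ff + A_cf, K = R·A·P. Suppose P satisfies the weak approximation property with respect to AᵀA with constant C_P, set C_W = sqrt(C_P·(1 + ‖W‖²)/‖AᵀA‖), and assume C_W·‖δ_R‖ < 1. Then K is invertible, and ‖A_ff⁻¹·δ_P·K⁻¹‖ ≤ C_W/(1 − C_W·‖δ_R‖) and ‖δ_P·K⁻¹‖ ≤ C_W·‖A_ff‖/(1 − C_W·‖δ_R‖). -/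

import Mathlib

open Matrix
open scoped Matrix.Norms.L2Operator

/-- The Euclidean (ℓ²) norm of a finitely-supported real vector. -/
noncomputable def euclNorm {ι : Type*} [Fintype ι] (v : ι → ℝ) : ℝ :=
  ‖(WithLp.equiv 2 (ι → ℝ)).symm v‖

section aux
variable {ι : Type*} [Fintype ι]

lemma euclNorm_def (v : ι → ℝ) : euclNorm v = Real.sqrt (∑ i, v i ^ 2) := by
  simp [euclNorm, EuclideanSpace.norm_eq, sq_abs]

lemma euclNorm_nonneg (v : ι → ℝ) : 0 ≤ euclNorm v := norm_nonneg _

lemma euclNorm_sq (v : ι → ℝ) : euclNorm v ^ 2 = ∑ i, v i ^ 2 := by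
  rw [euclNorm_def, Real.sq_sqrt (Finset.sum_nonneg fun i _ => sq_nonneg _)]

lemma euclNorm_eq_zero {v : ι → ℝ} (h : euclNorm v = 0) : v = 0 := by
  have : (WithLp.equiv 2 (ι → ℝ)).symm v = 0 := norm_eq_zero.mp h
  simpa using congrArg (WithLp.equiv 2 (ι → ℝ)) this

lemma euclNorm_neg (v : ι → ℝ) : euclNorm (-v) = euclNorm v := by
  simp [euclNorm_def]

lemma euclNorm_add_le (u v : ι → ℝ) : euclNorm (u + v) ≤ euclNorm u + euclNorm v := by
  have : (WithLp.equiv 2 (ι → ℝ)).symm (u + v)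
      = (WithLp.equiv 2 (ι → ℝ)).symm u + (WithLp.equiv 2 (ι → ℝ)).symm v := rfl
  simpa [euclNorm, this] using norm_add_le ((WithLp.equiv 2 (ι → ℝ)).symm u)
    ((WithLp.equiv 2 (ι → ℝ)).symm v)

lemma euclNorm_sub_comm (u v : ι → ℝ) : euclNorm (u - v) = euclNorm (v - u) := by
  rw [← euclNorm_neg (u - v)]; congr 1; abel

lemma euclNorm_sumElim_sq {F C : Type*} [Fintype F] [Fintype C] (a : F → ℝ) (b : C → ℝ) :
    euclNorm (Sum.elim a b) ^ 2 = euclNorm a ^ 2 + euclNorm b ^ 2 := by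
  simp [euclNorm_sq, Fintype.sum_sum_type]

lemma euclNorm_sumElim_zero {F C : Type*} [Fintype F] [Fintype C] (b : C → ℝ) :
    euclNorm (Sum.elim (0 : F → ℝ) b) = euclNorm b := by
  simp [euclNorm_def, Fintype.sum_sum_type]

lemma euclNorm_mulVec_le {m n : Type*} [Fintype m] [Fintype n] [DecidableEq n] (M : Matrix m n ℝ) (x : n → ℝ) :
    euclNorm (M *ᵥ x) ≤ ‖M‖ * euclNorm x :=
  M.l2_opNorm_mulVec ((WithLp.equiv 2 (n → ℝ)).symm x)

lemma opNorm_le_of_euclNorm {m n : Type*} [Fintype m] [Fintype n] [DecidableEq n] (M : Matrix m n ℝ) {c : ℝ}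
    (hc : 0 ≤ c) (h : ∀ x : n → ℝ, euclNorm (M *ᵥ x) ≤ c * euclNorm x) : ‖M‖ ≤ c := by
  rw [Matrix.l2_opNorm_def]
  refine ContinuousLinearMap.opNorm_le_bound _ hc fun x => ?_
  simpa [Matrix.toEuclideanLin_apply, euclNorm] using h (WithLp.equiv 2 (n → ℝ) x)

end aux


section scalarAux

private lemma wap_ineq1 {nW b c q n CWv : ℝ} (hb : 0 ≤ b) (hc : 0 ≤ c) (hn : 0 ≤ n)
    (hW : 0 ≤ nW) (hsq : c ^ 2 + b ^ 2 ≤ q * n ^ 2)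
    (hCW : CWv = Real.sqrt ((1 + nW ^ 2) * q)) :
    nW * b + c ≤ CWv * n := by
  have hqn : 0 ≤ q * n ^ 2 := le_trans (by positivity) hsq
  have h1 : CWv * n = Real.sqrt ((1 + nW ^ 2) * q * n ^ 2) := by
    rw [Real.sqrt_mul' _ (sq_nonneg n), Real.sqrt_sq hn, hCW]
  rw [h1, Real.le_sqrt (by positivity) (by nlinarith)]
  nlinarith [sq_nonneg (nW * c - b)]

private lemma wap_ineq2 {dR CWv sn kn en : ℝ} (hdR : 0 ≤ dR)
    (h1 : sn ≤ kn + en) (h2 : en ≤ dR * (CWv * sn)) :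
    (1 - CWv * dR) * sn ≤ kn := by nlinarith

private lemma wap_ineq3 {a sn : ℝ} (ha : 0 < a) (hs : 0 ≤ sn) (h : a * sn ≤ 0) : sn = 0 := by
  nlinarith

private lemma wap_ineq4 {CWv dR en sn yn : ℝ} (hCW : 0 ≤ CWv) (hone : 0 < 1 - CWv * dR)
    (hs : 0 ≤ sn) (h2 : en ≤ CWv * sn) (h3 : (1 - CWv * dR) * sn ≤ yn) :
    en * (1 - CWv * dR) ≤ CWv * yn := by nlinarith

end scalarAux

/-- **Lemma 3.2 (WAP on P).** If `P` satisfies the WAP with respect to `AᵀA` with constant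
`C_P`, and `C_W·‖δ_R‖ < 1` with `C_W = sqrt(C_P(1 + ‖W‖²)/‖AᵀA‖)`, then `K` is invertible,
`‖A_ff⁻¹·δ_P·K⁻¹‖ ≤ C_W/(1 − C_W‖δ_R‖)` and `‖δ_P·K⁻¹‖ ≤ C_W‖A_ff‖/(1 − C_W‖δ_R‖)`. -/
theorem wap_on_P_coarse_bounds
    {F C : Type*} [Fintype F] [Fintype C] [DecidableEq F] [DecidableEq C]
    (Aff : Matrix F F ℝ) (Afc : Matrix F C ℝ) (Acf : Matrix C F ℝ) (Acc : Matrix C C ℝ)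
    (W : Matrix F C ℝ) (Z : Matrix C F ℝ)
    (A : Matrix (F ⊕ C) (F ⊕ C) ℝ) (hA : A = fromBlocks Aff Afc Acf Acc)
    (hAinv : IsUnit A) (hAff : IsUnit Aff)
    (P : Matrix (F ⊕ C) C ℝ) (hP : P = fromRows W 1)
    (R : Matrix C (F ⊕ C) ℝ) (hR : R = fromCols Z 1)
    (K : Matrix C C ℝ) (hK : K = R * A * P)
    (δP : Matrix F C ℝ) (hδP : δP = Aff * W + Afc)
    (δR : Matrix C F ℝ) (hδR : δR = Z * Aff + Acf)
    (CP : ℝ)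
    (hWAP : ∀ v : (F ⊕ C) → ℝ, ∃ wc : C → ℝ,
      euclNorm (v - P *ᵥ wc) ^ 2 ≤ (CP / ‖Aᵀ * A‖) * euclNorm (A *ᵥ v) ^ 2)
    (CW : ℝ) (hCW : CW = Real.sqrt (CP * (1 + ‖W‖ ^ 2) / ‖Aᵀ * A‖))
    (hsmall : CW * ‖δR‖ < 1) :
    IsUnit K ∧
      ‖Aff⁻¹ * δP * K⁻¹‖ ≤ CW / (1 - CW * ‖δR‖) ∧
      ‖δP * K⁻¹‖ ≤ CW * ‖Aff‖ / (1 - CW * ‖δR‖) := by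
  have hAffd : IsUnit Aff.det := (Matrix.isUnit_iff_isUnit_det _).mp hAff
  have hCWnn : 0 ≤ CW := hCW ▸ Real.sqrt_nonneg _
  obtain ⟨dR, hdR⟩ : ∃ t, ‖δR‖ = t := ⟨_, rfl⟩
  obtain ⟨nW, hnW⟩ : ∃ t, ‖W‖ = t := ⟨_, rfl⟩
  obtain ⟨nA, hnA⟩ : ∃ t, ‖Aᵀ * A‖ = t := ⟨_, rfl⟩
  obtain ⟨nAff, hnAff⟩ : ∃ t, ‖Aff‖ = t := ⟨_, rfl⟩
  have hdRnn : 0 ≤ dR := hdR ▸ norm_nonneg _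
  have hnWnn : 0 ≤ nW := hnW ▸ norm_nonneg _
  have hnAffnn : 0 ≤ nAff := hnAff ▸ norm_nonneg _
  rw [hdR] at hsmall
  rw [hdR, hnAff]
  rw [hnA, hnW] at hCW
  simp only [hnA] at hWAP
  have hone : 0 < 1 - CW * dR := sub_pos.mpr hsmall
  set q : ℝ := CP / nA with hq
  set S : Matrix C C ℝ := Acc - Acf * Aff⁻¹ * Afc with hS
  set E : Matrix F C ℝ := Aff⁻¹ * δP with hE
  have hAffE : Aff * E = δP := Matrix.mul_nonsing_inv_cancel_left Aff δP hAffd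
  -- K = S + δR * E
  have hKid : K = S + δR * E := by
    rw [hK, hR, hA, hP, Matrix.fromCols_mul_fromBlocks, Matrix.fromCols_mul_fromRows]
    rw [hE, hδP, hδR, hS, Matrix.mul_add, Matrix.nonsing_inv_mul_cancel_left Aff W hAffd]
    rw [Matrix.mul_add, Matrix.add_mul (Z * Aff) Acf (Aff⁻¹ * Afc),
      Matrix.mul_assoc Z Aff (Aff⁻¹ * Afc), Matrix.mul_nonsing_inv_cancel_left Aff Afc hAffd]
    simp only [Matrix.one_mul, Matrix.mul_one, Matrix.add_mul, ← Matrix.mul_assoc]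
    abel
  -- pointwise WAP bound
  have key : ∀ x : C → ℝ, euclNorm (E *ᵥ x) ≤ CW * euclNorm (S *ᵥ x) := by
    intro x
    set W' : Matrix F C ℝ := -(Aff⁻¹ * Afc) with hW'
    set v : (F ⊕ C) → ℝ := Sum.elim (W' *ᵥ x) x with hv
    obtain ⟨wc, hwc⟩ := hWAP v
    have hAv : A *ᵥ v = Sum.elim (0 : F → ℝ) (S *ᵥ x) := by
      rw [hA, Matrix.fromBlocks_mulVec]
      have h1 : v ∘ Sum.inl = W' *ᵥ x := rfl
      have h2 : v ∘ Sum.inr = x := rfl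
      rw [h1, h2]
      have hAW' : Aff * W' = -Afc := by
        rw [hW', Matrix.mul_neg, Matrix.mul_nonsing_inv_cancel_left Aff Afc hAffd]
      have hf : Aff *ᵥ (W' *ᵥ x) + Afc *ᵥ x = 0 := by
        rw [Matrix.mulVec_mulVec, hAW', Matrix.neg_mulVec]; simp
      have hc2 : Acf *ᵥ (W' *ᵥ x) + Acc *ᵥ x = S *ᵥ x := by
        have hAcfW' : Acf * W' = -(Acf * Aff⁻¹ * Afc) := by
          rw [hW', Matrix.mul_neg, Matrix.mul_assoc]
        rw [Matrix.mulVec_mulVec, ← Matrix.add_mulVec, hAcfW', hS, sub_eq_neg_add]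
      rw [hf, hc2]
    have hAvn : euclNorm (A *ᵥ v) = euclNorm (S *ᵥ x) := by rw [hAv, euclNorm_sumElim_zero]
    have hPwc : P *ᵥ wc = Sum.elim (W *ᵥ wc) wc := by
      rw [hP, Matrix.fromRows_mulVec]; simp
    have hdiff : v - P *ᵥ wc = Sum.elim (W' *ᵥ x - W *ᵥ wc) (x - wc) := by
      rw [hPwc, hv]; funext i; cases i <;> simp
    have hEx : E *ᵥ x = W *ᵥ (x - wc) + (W *ᵥ wc - W' *ᵥ x) := by
      have hEW : E = W - W' := by
        rw [hE, hδP, Matrix.mul_add, Matrix.nonsing_inv_mul_cancel_left Aff W hAffd, hW']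
        simp [sub_neg_eq_add]
      rw [hEW, Matrix.sub_mulVec, Matrix.mulVec_sub]
      abel
    obtain ⟨m, hm⟩ : ∃ t, euclNorm (E *ᵥ x) = t := ⟨_, rfl⟩
    obtain ⟨b, hb⟩ : ∃ t, euclNorm (x - wc) = t := ⟨_, rfl⟩
    obtain ⟨c, hc⟩ : ∃ t, euclNorm (W' *ᵥ x - W *ᵥ wc) = t := ⟨_, rfl⟩
    obtain ⟨n, hn⟩ : ∃ t, euclNorm (S *ᵥ x) = t := ⟨_, rfl⟩
    rw [hm, hn]
    clear_value q
    have hsq : c ^ 2 + b ^ 2 ≤ q * n ^ 2 := by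
      rw [hdiff, euclNorm_sumElim_sq, hAvn, hb, hc, hn] at hwc
      exact hwc
    have hEbound : m ≤ nW * b + c := by
      calc m ≤ euclNorm (W *ᵥ (x - wc)) + euclNorm (W *ᵥ wc - W' *ᵥ x) := by
            rw [← hm, hEx]; exact euclNorm_add_le _ _
        _ ≤ nW * b + c := by
            have h1 := euclNorm_mulVec_le W (x - wc)
            have h2 : euclNorm (W *ᵥ wc - W' *ᵥ x) = c := by
              rw [← hc, euclNorm_sub_comm]
            rw [hnW, hb] at h1
            rw [h2]
            exact add_le_add_left h1 c
    have hbnn : 0 ≤ b := hb ▸ euclNorm_nonneg _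
    have hcnn : 0 ≤ c := hc ▸ euclNorm_nonneg _
    have hnnn : 0 ≤ n := hn ▸ euclNorm_nonneg _
    have hCW' : CW = Real.sqrt ((1 + nW ^ 2) * q) := by
      rw [hCW, hq]; congr 1; ring
    have hfin : nW * b + c ≤ CW * n := wap_ineq1 hbnn hcnn hnnn hnWnn hsq hCW'
    exact le_trans hEbound hfin
  -- S invertible
  have hSdet : IsUnit S.det := by
    haveI := Matrix.invertibleOfIsUnitDet Aff hAffd
    have hdet : A.det = Aff.det * S.det := by
      rw [hA, Matrix.det_fromBlocks₁₁, Matrix.invOf_eq_nonsing_inv, hS]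
    have hu : IsUnit A.det := (Matrix.isUnit_iff_isUnit_det _).mp hAinv
    rw [hdet] at hu
    exact (IsUnit.mul_iff.mp hu).2
  clear_value S E
  -- lower bound on K
  have hKlow : ∀ x : C → ℝ, (1 - CW * dR) * euclNorm (S *ᵥ x) ≤ euclNorm (K *ᵥ x) := by
    intro x
    have hKx : K *ᵥ x = S *ᵥ x + δR *ᵥ (E *ᵥ x) := by
      rw [hKid, Matrix.add_mulVec, ← Matrix.mulVec_mulVec]
    have h1 : euclNorm (S *ᵥ x) ≤ euclNorm (K *ᵥ x) + euclNorm (δR *ᵥ (E *ᵥ x)) := by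
      have hsx : S *ᵥ x = K *ᵥ x + -(δR *ᵥ (E *ᵥ x)) := by rw [hKx]; abel
      calc euclNorm (S *ᵥ x) = euclNorm (K *ᵥ x + -(δR *ᵥ (E *ᵥ x))) := by rw [← hsx]
        _ ≤ euclNorm (K *ᵥ x) + euclNorm (-(δR *ᵥ (E *ᵥ x))) := euclNorm_add_le _ _
        _ = euclNorm (K *ᵥ x) + euclNorm (δR *ᵥ (E *ᵥ x)) := by rw [euclNorm_neg]
    have h2 : euclNorm (δR *ᵥ (E *ᵥ x)) ≤ dR * (CW * euclNorm (S *ᵥ x)) := by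
      calc euclNorm (δR *ᵥ (E *ᵥ x)) ≤ dR * euclNorm (E *ᵥ x) := by
            rw [← hdR]; exact euclNorm_mulVec_le _ _
        _ ≤ dR * (CW * euclNorm (S *ᵥ x)) :=
            mul_le_mul_of_nonneg_left (key x) hdRnn
    obtain ⟨sn, hsn⟩ : ∃ t, euclNorm (S *ᵥ x) = t := ⟨_, rfl⟩
    obtain ⟨kn, hkn⟩ : ∃ t, euclNorm (K *ᵥ x) = t := ⟨_, rfl⟩
    obtain ⟨en, hen⟩ : ∃ t, euclNorm (δR *ᵥ (E *ᵥ x)) = t := ⟨_, rfl⟩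
    rw [hsn, hkn, hen] at h1
    rw [hsn, hen] at h2
    rw [hsn, hkn]
    exact wap_ineq2 hdRnn h1 h2
  -- K invertible
  have hKinj : ∀ x : C → ℝ, K *ᵥ x = 0 → x = 0 := by
    intro x hx
    have h0 : euclNorm (K *ᵥ x) = 0 := by rw [hx, euclNorm_def]; simp
    have h1 := hKlow x
    rw [h0] at h1
    have hsnn := euclNorm_nonneg (S *ᵥ x)
    have h2 : euclNorm (S *ᵥ x) = 0 := wap_ineq3 hone hsnn h1
    have h3 : S *ᵥ x = 0 := euclNorm_eq_zero h2
    have h4 := congrArg (fun y => S⁻¹ *ᵥ y) h3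
    simpa [Matrix.mulVec_mulVec, Matrix.nonsing_inv_mul S hSdet] using h4
  have hKunit : IsUnit K := by
    rw [← Matrix.mulVec_injective_iff_isUnit]
    intro x y hxy
    have hxy0 : K *ᵥ (x - y) = 0 := by rw [Matrix.mulVec_sub, hxy, sub_self]
    exact sub_eq_zero.mp (hKinj _ hxy0)
  have hKdet : IsUnit K.det := (Matrix.isUnit_iff_isUnit_det _).mp hKunit
  have hEK : ‖E * K⁻¹‖ ≤ CW / (1 - CW * dR) := by
    apply opNorm_le_of_euclNorm _ (div_nonneg hCWnn hone.le)
    intro y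
    have hz : K *ᵥ (K⁻¹ *ᵥ y) = y := by
      rw [Matrix.mulVec_mulVec, Matrix.mul_nonsing_inv K hKdet, Matrix.one_mulVec]
    have h1 : euclNorm ((E * K⁻¹) *ᵥ y) = euclNorm (E *ᵥ (K⁻¹ *ᵥ y)) := by
      rw [← Matrix.mulVec_mulVec]
    have h2 := key (K⁻¹ *ᵥ y)
    have h3 := hKlow (K⁻¹ *ᵥ y)
    rw [hz] at h3
    rw [h1, div_mul_eq_mul_div, le_div_iff₀ hone]
    obtain ⟨sn, hsn⟩ : ∃ t, euclNorm (S *ᵥ (K⁻¹ *ᵥ y)) = t := ⟨_, rfl⟩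
    obtain ⟨en, hen⟩ : ∃ t, euclNorm (E *ᵥ (K⁻¹ *ᵥ y)) = t := ⟨_, rfl⟩
    obtain ⟨yn, hyn⟩ : ∃ t, euclNorm y = t := ⟨_, rfl⟩
    have hsnn : 0 ≤ sn := hsn ▸ euclNorm_nonneg _
    rw [hsn, hyn] at h3
    rw [hsn, hen] at h2
    rw [hen, hyn]
    exact wap_ineq4 hCWnn hone (hsn ▸ euclNorm_nonneg _) h2 h3
  refine ⟨hKunit, hEK, ?_⟩
  have hrw : δP * K⁻¹ = Aff * (E * K⁻¹) := by rw [← Matrix.mul_assoc, hAffE]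
  rw [hrw]
  calc ‖Aff * (E * K⁻¹)‖ ≤ ‖Aff‖ * ‖E * K⁻¹‖ := Matrix.l2_opNorm_mul _ _
    _ ≤ nAff * (CW / (1 - CW * dR)) := by
        rw [hnAff]; exact mul_le_mul_of_nonneg_left hEK hnAffnn
    _ = CW * nAff / (1 - CW * dR) := by ring
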